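/- For any ξ and c ∈ ℝ^m, the threshold c belongs to S(ξ) if and only if the value W_ξ(c) = max over controls u of inf over scenarios w of min{ min_k Φ^c_k(x_k,u_k), Θ^c(x_{N+1}) } is nonnegative, where Φ^c_k(x,u) = min_i (g^k_i(x,u) − c_i) and Θ^c(x) = min_i (θ_i(x) − c_i). -/

import Mathlib

/-- Trajectory of the discrete-time control system `x_{k+1} = F_k(x_k, u_k, ω_k)`, `x_0 = ξ`. -/
def traj {X U W : Type*} (F : ℕ → X → U → W → X) (ξ : X) (u : ℕ → U) (w : ℕ → W) : ℕ → X
  | 0 => ξ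
  | k + 1 => F k (traj F ξ u w k) (u k) (w k)

/-- `u` is admissible for `(ξ, c)`: for every scenario, the mixed and end-point
constraints hold (componentwise, thresholds `c`). -/
def Adm {X U W : Type*} {m : ℕ} (N : ℕ) (F : ℕ → X → U → W → X) (Ω : ℕ → Set W)
    (g : ℕ → X → U → Fin m → ℝ) (θ : X → Fin m → ℝ) (ξ : X) (c : Fin m → ℝ)
    (u : ℕ → U) : Prop :=
  ∀ w : ℕ → W, (∀ k, w k ∈ Ω k) →
    (∀ k ≤ N, c ≤ g k (traj F ξ u w k) (u k)) ∧ c ≤ θ (traj F ξ u w (N + 1))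

/-- The set of robust sustainable thresholds `S(ξ)`. -/
def SST {X U W : Type*} {m : ℕ} (N : ℕ) (F : ℕ → X → U → W → X) (Ω : ℕ → Set W)
    (g : ℕ → X → U → Fin m → ℝ) (θ : X → Fin m → ℝ) (ξ : X) : Set (Fin m → ℝ) :=
  {c | ∃ u : ℕ → U, Adm N F Ω g θ ξ c u}


/-- The level-set cost `J^c(u) = inf_w min{ min_{k≤N} Φ^c_k(x_k,u_k), Θ^c(x_{N+1}) }`,
where `Φ^c_k(x,u) = min_i (g^k_i(x,u) - c_i)` and `Θ^c(x) = min_i (θ_i(x) - c_i)`. -/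
noncomputable def Jfun {X U W : Type*} {m : ℕ} [NeZero m] (N : ℕ)
    (F : ℕ → X → U → W → X) (Ω : ℕ → Set W)
    (g : ℕ → X → U → Fin m → ℝ) (θ : X → Fin m → ℝ) (ξ : X) (c : Fin m → ℝ)
    (u : ℕ → U) : ℝ :=
  ⨅ w : {w : ℕ → W // ∀ k, w k ∈ Ω k},
    min ((Finset.Icc 0 N).inf' (Finset.nonempty_Icc.2 (Nat.zero_le N))
          fun k => ⨅ i, (g k (traj F ξ u w.1 k) (u k) i - c i))
        (⨅ i, (θ (traj F ξ u w.1 (N + 1)) i - c i))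

/-- The level-set value `W_ξ(c) = max_u J^c(u)`. -/
noncomputable def Wval {X U W : Type*} {m : ℕ} [NeZero m] (N : ℕ)
    (F : ℕ → X → U → W → X) (Ω : ℕ → Set W)
    (g : ℕ → X → U → Fin m → ℝ) (θ : X → Fin m → ℝ) (ξ : X) (c : Fin m → ℝ) : ℝ :=
  sSup (Set.range (Jfun N F Ω g θ ξ c))


private lemma usc_max_exists {α : Type*} [TopologicalSpace α] [CompactSpace α] [Nonempty α]
    {f : α → ℝ} (hf : UpperSemicontinuous f) : ∃ x, ∀ y, f y ≤ f x := by
  by_contra h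
  push_neg at h
  have hcov : (Set.univ : Set α) ⊆ ⋃ y : α, {x | f x < f y} := by
    intro x _
    obtain ⟨y, hy⟩ := h x
    exact Set.mem_iUnion.2 ⟨y, hy⟩
  obtain ⟨t, ht⟩ := isCompact_univ.elim_finite_subcover (fun y : α => {x | f x < f y})
    (fun y => hf.isOpen_preimage (f y)) hcov
  have htne : t.Nonempty := by
    rcases t.eq_empty_or_nonempty with rfl | h'
    · simpa using ht (Set.mem_univ (Classical.arbitrary α))
    · exact h'
  obtain ⟨y0, hy0, hmax⟩ := t.exists_max_image f htne
  have hy0' := ht (Set.mem_univ y0)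
  simp only [Set.mem_iUnion, Set.mem_setOf_eq] at hy0'
  obtain ⟨z, hz, hlt⟩ := hy0'
  exact absurd (hmax z hz) (not_le.2 hlt)

private lemma usc_sub_const {α : Type*} [TopologicalSpace α] {f : α → ℝ}
    (hf : UpperSemicontinuous f) (c : ℝ) : UpperSemicontinuous fun x => f x - c := by
  intro x y hy
  filter_upwards [hf x (y + c) (by have hy' : f x - c < y := hy; linarith)] with z hz
  show f z - c < y
  linarith

private lemma usc_min' {α : Type*} [TopologicalSpace α] {f g : α → ℝ}
    (hf : UpperSemicontinuous f) (hg : UpperSemicontinuous g) :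
    UpperSemicontinuous fun x => min (f x) (g x) := by
  rw [upperSemicontinuous_iff_isOpen_preimage]
  intro y
  have : (fun x => min (f x) (g x)) ⁻¹' Set.Iio y = {x | f x < y} ∪ {x | g x < y} := by
    ext x; simp [min_lt_iff]
  rw [this]
  exact (hf.isOpen_preimage y).union (hg.isOpen_preimage y)

private lemma usc_finset_inf' {α ι : Type*} [TopologicalSpace α] {s : Finset ι} (hs : s.Nonempty)
    {f : ι → α → ℝ} (hf : ∀ i ∈ s, UpperSemicontinuous (f i)) :
    UpperSemicontinuous fun x => s.inf' hs fun i => f i x := by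
  rw [upperSemicontinuous_iff_isOpen_preimage]
  intro y
  have : (fun x => s.inf' hs fun i => f i x) ⁻¹' Set.Iio y = ⋃ i ∈ s, {x | f i x < y} := by
    ext x; simp [Finset.inf'_lt_iff]
  rw [this]
  exact isOpen_biUnion fun i hi => (hf i hi).isOpen_preimage y

private lemma usc_fin_iInf {α : Type*} [TopologicalSpace α] {m : ℕ} [NeZero m]
    {f : Fin m → α → ℝ} (hf : ∀ i, UpperSemicontinuous (f i)) :
    UpperSemicontinuous fun x => ⨅ i, f i x := by
  haveI : Nonempty (Fin m) := Fin.pos_iff_nonempty.1 (Nat.pos_of_ne_zero (NeZero.ne m))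
  have h : ∀ x, (⨅ i, f i x) = Finset.univ.inf' Finset.univ_nonempty fun i => f i x := fun x =>
    (Finset.inf'_univ_eq_ciInf _).symm
  simp only [h]
  exact usc_finset_inf' _ fun i _ => hf i

private lemma usc_iInf' {α ι : Type*} [TopologicalSpace α] [Nonempty ι]
    {f : ι → α → ℝ} {B : ℝ} (hB : ∀ i x, B ≤ f i x)
    (hf : ∀ i, UpperSemicontinuous (f i)) :
    UpperSemicontinuous fun x => ⨅ i, f i x := by
  rw [upperSemicontinuous_iff_isOpen_preimage]
  intro y
  have hbdd : ∀ x, BddBelow (Set.range fun i => f i x) := fun x =>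
    ⟨B, by rintro _ ⟨i, rfl⟩; exact hB i x⟩
  have : (fun x => ⨅ i, f i x) ⁻¹' Set.Iio y = ⋃ i, {x | f i x < y} := by
    ext x
    simp only [Set.mem_preimage, Set.mem_Iio, Set.mem_iUnion, Set.mem_setOf_eq]
    exact ciInf_lt_iff (hbdd x)
  rw [this]
  exact isOpen_iUnion fun i => (hf i).isOpen_preimage y

theorem stmt10 {X U W : Type*} [NormedAddCommGroup X] [NormedSpace ℝ X]
    [FiniteDimensional ℝ X] [MetricSpace U] [CompactSpace U] [Nonempty U]
    {m N : ℕ} [NeZero m] (F : ℕ → X → U → W → X) (Ω : ℕ → Set W)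
    (hΩ : ∀ k, (Ω k).Nonempty)
    (g : ℕ → X → U → Fin m → ℝ) (θ : X → Fin m → ℝ)
    (hF : ∀ k, ∀ ω ∈ Ω k, Continuous fun p : X × U => F k p.1 p.2 ω)
    (hg_usc : ∀ k i, UpperSemicontinuous fun p : X × U => g k p.1 p.2 i)
    (hg_bdd : ∀ k i, BddBelow (Set.range fun p : X × U => g k p.1 p.2 i))
    (hθ_usc : ∀ i, UpperSemicontinuous fun x => θ x i)
    (hθ_bdd : ∀ i, BddBelow (Set.range fun x => θ x i))
    (ξ : X)
    (c : Fin m → ℝ) :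
    c ∈ SST N F Ω g θ ξ ↔ 0 ≤ Wval N F Ω g θ ξ c := by
  classical
  haveI : Nonempty {w : ℕ → W // ∀ k, w k ∈ Ω k} :=
    ⟨⟨fun k => (hΩ k).choose, fun k => (hΩ k).choose_spec⟩⟩
  haveI : Nonempty (Fin m) := Fin.pos_iff_nonempty.1 (Nat.pos_of_ne_zero (NeZero.ne m))
  have hfinbdd : ∀ f : Fin m → ℝ, BddBelow (Set.range f) := fun f =>
    (Set.finite_range f).bddBelow
  set Bg : ℕ → Fin m → ℝ := fun k i => sInf (Set.range fun p : X × U => g k p.1 p.2 i) with hBgdef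
  have hBg : ∀ k i x u, Bg k i ≤ g k x u i := fun k i x u =>
    csInf_le (hg_bdd k i) ⟨(x, u), rfl⟩
  set Bθ : Fin m → ℝ := fun i => sInf (Set.range fun x => θ x i) with hBθdef
  have hBθ : ∀ i x, Bθ i ≤ θ x i := fun i x => csInf_le (hθ_bdd i) ⟨x, rfl⟩
  set B : ℝ := min ((Finset.Icc 0 N).inf' (Finset.nonempty_Icc.2 (Nat.zero_le N))
      fun k => ⨅ i, (Bg k i - c i)) (⨅ i, (Bθ i - c i)) with hBdef
  have hBlow : ∀ (u : ℕ → U) (w : {w : ℕ → W // ∀ k, w k ∈ Ω k}),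
      B ≤ min ((Finset.Icc 0 N).inf' (Finset.nonempty_Icc.2 (Nat.zero_le N))
            fun k => ⨅ i, (g k (traj F ξ u w.1 k) (u k) i - c i))
          (⨅ i, (θ (traj F ξ u w.1 (N + 1)) i - c i)) := by
    intro u w
    refine le_min (Finset.le_inf' _ _ fun k hk => ?_) ?_
    · calc B ≤ _ := min_le_left _ _
        _ ≤ ⨅ i, (Bg k i - c i) := Finset.inf'_le _ hk
        _ ≤ _ := ciInf_mono (hfinbdd _) fun i => sub_le_sub_right (hBg k i _ _) _
    · calc B ≤ _ := min_le_right _ _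
        _ ≤ _ := ciInf_mono (hfinbdd _) fun i => sub_le_sub_right (hBθ i _) _
  have hJbdd : ∀ u : ℕ → U, BddBelow (Set.range fun w : {w : ℕ → W // ∀ k, w k ∈ Ω k} =>
      min ((Finset.Icc 0 N).inf' (Finset.nonempty_Icc.2 (Nat.zero_le N))
            fun k => ⨅ i, (g k (traj F ξ u w.1 k) (u k) i - c i))
          (⨅ i, (θ (traj F ξ u w.1 (N + 1)) i - c i))) := fun u =>
    ⟨B, by rintro _ ⟨w, rfl⟩; exact hBlow u w⟩
  constructor
  · rintro ⟨u, hu⟩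
    have h0 : 0 ≤ Jfun N F Ω g θ ξ c u := by
      apply Real.iInf_nonneg
      intro w
      obtain ⟨h1, h2⟩ := hu w.1 w.2
      refine le_min (Finset.le_inf' _ _ fun k hk => Real.iInf_nonneg fun i => ?_)
        (Real.iInf_nonneg fun i => ?_)
      · have hk' : k ≤ N := (Finset.mem_Icc.1 hk).2
        have := h1 k hk' i
        linarith
      · have := h2 i
        linarith
    by_cases hb : BddAbove (Set.range (Jfun N F Ω g θ ξ c))
    · exact h0.trans (le_csSup hb ⟨u, rfl⟩)
    · unfold Wval
      rw [csSup_of_not_bddAbove hb, Real.sSup_empty]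
  · intro h0
    have hJusc : UpperSemicontinuous (Jfun N F Ω g θ ξ c) := by
      have htraj : ∀ (w : {w : ℕ → W // ∀ k, w k ∈ Ω k}) k,
          Continuous fun u : ℕ → U => traj F ξ u w.1 k := by
        intro w k
        induction k with
        | zero => exact continuous_const
        | succ k ih =>
          exact (hF k (w.1 k) (w.2 k)).comp (ih.prodMk (continuous_apply k))
      apply usc_iInf' (B := B) (f := fun (w : {w : ℕ → W // ∀ k, w k ∈ Ω k}) (u : ℕ → U) =>
        min ((Finset.Icc 0 N).inf' (Finset.nonempty_Icc.2 (Nat.zero_le N))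
              fun k => ⨅ i, (g k (traj F ξ u w.1 k) (u k) i - c i))
            (⨅ i, (θ (traj F ξ u w.1 (N + 1)) i - c i)))
        (fun w u => hBlow u w) ?_
      intro w
      apply usc_min'
      · apply usc_finset_inf'
        intro k _
        apply usc_fin_iInf
        intro i
        exact usc_sub_const
          (UpperSemicontinuous.comp (hg_usc k i) ((htraj w k).prodMk (continuous_apply k))) (c i)
      · apply usc_fin_iInf
        intro i
        exact usc_sub_const (UpperSemicontinuous.comp (hθ_usc i) (htraj w (N + 1))) (c i)
    obtain ⟨u, hu⟩ := usc_max_exists hJusc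
    have hW : Wval N F Ω g θ ξ c ≤ Jfun N F Ω g θ ξ c u :=
      csSup_le (Set.range_nonempty _) (by rintro _ ⟨v, rfl⟩; exact hu v)
    have h0' : 0 ≤ Jfun N F Ω g θ ξ c u := le_trans h0 hW
    refine ⟨u, fun w hw => ?_⟩
    have hterm := ciInf_le (hJbdd u) (⟨w, hw⟩ : {w : ℕ → W // ∀ k, w k ∈ Ω k})
    have h0t : 0 ≤ min ((Finset.Icc 0 N).inf' (Finset.nonempty_Icc.2 (Nat.zero_le N))
          fun k => ⨅ i, (g k (traj F ξ u w k) (u k) i - c i))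
        (⨅ i, (θ (traj F ξ u w (N + 1)) i - c i)) := le_trans h0' hterm
    obtain ⟨hA, hB2⟩ := le_min_iff.1 h0t
    constructor
    · intro k hk i
      have h1 : (0:ℝ) ≤ ⨅ i, (g k (traj F ξ u w k) (u k) i - c i) :=
        le_trans hA (Finset.inf'_le _ (Finset.mem_Icc.2 ⟨Nat.zero_le k, hk⟩))
      have h2 := ciInf_le (hfinbdd fun i => g k (traj F ξ u w k) (u k) i - c i) i
      have h3 := le_trans h1 h2
      linarith
    · intro i
      have h2 := ciInf_le (hfinbdd fun i => θ (traj F ξ u w (N + 1)) i - c i) i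
      have h3 := le_trans hB2 h2
      linarith
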